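/- There exists R₀ > 0 (depending only on c and N) such that if R ≥ R₀, then for every integer k ≥ 1 the derivative f′(z) is nonzero for every z in the annulus V_k = {z : 3R_k/2 ≤ |z| ≤ 5R_k/2}. -/

import Mathlib

open Complex

noncomputable section

/-- `f₀(z) = z² + c` iterated `N` times. -/
def f0iter (c : ℂ) (N : ℕ) (z : ℂ) : ℂ := (fun w => w ^ 2 + c)^[N] z

/-- `n_k = 2^(N + k - 1)`. -/
def nseq (N k : ℕ) : ℕ := 2 ^ (N + k - 1)

/-- The radii `R_k`: `R₁ = 2R`, `R_{k+1} = max {|f_k(z)| : |z| = 2 R_k}` where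
`f_k(z) = f₀^N(z) · ∏_{j=1}^k (1 - (1/2)(z/R_j)^{n_j})`. -/
def Rseq (c : ℂ) (N : ℕ) (R : ℝ) : ℕ → ℝ
  | 0 => R
  | 1 => 2 * R
  | k + 2 =>
      sSup ((fun z => ‖f0iter c N z *
        ∏ j ∈ (Finset.Icc 1 (k + 1)).attach,
          (1 - (1 / 2) * (z / ((Rseq c N R j.1 : ℝ) : ℂ)) ^ nseq N j.1)‖) ''
        Metric.sphere (0 : ℂ) (2 * Rseq c N R (k + 1)))
  decreasing_by
  · have := j.2; simp only [Finset.mem_Icc] at this; omega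
  · omega

/-- `F_k(z) = 1 - (1/2)(z/R_k)^{n_k}`. -/
def Fseq (c : ℂ) (N : ℕ) (R : ℝ) (k : ℕ) (z : ℂ) : ℂ :=
  1 - (1 / 2) * (z / ((Rseq c N R k : ℝ) : ℂ)) ^ nseq N k

/-- The partial product `f_k(z) = f₀^N(z) · ∏_{j=1}^k F_j(z)`. -/
def fseq (c : ℂ) (N : ℕ) (R : ℝ) (k : ℕ) (z : ℂ) : ℂ :=
  f0iter c N z * ∏ j ∈ Finset.Icc 1 k, Fseq c N R j z

/-- The infinite product `f(z) = f₀^N(z) · ∏_{k=1}^∞ F_k(z)`. -/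
def flim (c : ℂ) (N : ℕ) (R : ℝ) (z : ℂ) : ℂ :=
  f0iter c N z * ∏' k : ℕ, Fseq c N R (k + 1) z

/-- The standing assumption `1/2 ≤ |f₀^N(z)|/|z|^{2^N} ≤ 2` for `|z| ≥ R`. -/
def OneBound (c : ℂ) (N : ℕ) (R : ℝ) : Prop :=
  ∀ z : ℂ, R ≤ ‖z‖ →
    1 / 2 ≤ ‖f0iter c N z‖ / ‖z‖ ^ 2 ^ N ∧
    ‖f0iter c N z‖ / ‖z‖ ^ 2 ^ N ≤ 2

/-- `C₁ = R₁^{n₁}/2`, and for `k ≥ 2`,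
`C_k = (-1)^{k-1} 2^{-k} R_k^{n_k} ∏_{j=1}^{k-1} R_j^{-n_j}`. -/
def Cseq (c : ℂ) (N : ℕ) (R : ℝ) (k : ℕ) : ℝ :=
  (-1) ^ (k - 1) * Rseq c N R k ^ nseq N k /
    (2 ^ k * ∏ j ∈ Finset.Icc 1 (k - 1), Rseq c N R j ^ nseq N j)

def Complex.abs : AbsoluteValue ℂ ℝ := NormedField.toAbsoluteValue ℂ

@[simp]
theorem Complex.abs_apply (z : ℂ) : Complex.abs z = ‖z‖ := rfl

theorem Complex.norm_eq_abs (z : ℂ) : ‖z‖ = Complex.abs z := rfl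

theorem Complex.abs_ofReal (r : ℝ) : Complex.abs (r : ℂ) = |r| := Complex.norm_real r

theorem Complex.abs_natCast (n : ℕ) : Complex.abs (n : ℂ) = n := Complex.norm_natCast n

theorem Complex.continuous_abs : Continuous Complex.abs := continuous_norm

theorem Complex.abs_re_le_abs (z : ℂ) : |z.re| ≤ Complex.abs z := Complex.abs_re_le_norm z

section AuxLemmas

open Finset

lemma aux_master (q j : ℕ) (hq : j + 2 ≤ q) :
    (4 * q : ℝ) * (3 / 5) ^ (4 * q - 1) ≤ (1 / 2) ^ j := by
  have hq2 : 2 ≤ q := by omega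
  have h35 : ((3:ℝ)/5) ^ (4*q-1) ≤ ((3:ℝ)/5) ^ (3*q) := by
    apply pow_le_pow_of_le_one (by norm_num) (by norm_num)
    omega
  have h1 : ((3:ℝ)/5) ^ (3*q) = ((27:ℝ)/125) ^ q := by
    rw [pow_mul]; norm_num
  have h3 : ((27:ℝ)/125 : ℝ) ^ q ≤ ((1:ℝ)/2) ^ q * ((1:ℝ)/2) ^ q := by
    rw [← mul_pow]
    apply pow_le_pow_left₀ (by norm_num) (by norm_num)
  have hq1 : (q:ℝ) * ((1:ℝ)/2) ^ q ≤ 1 := by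
    have hlt : (q:ℝ) < 2 ^ q := by exact_mod_cast (Nat.lt_two_pow_self (n := q))
    have h2q : (0:ℝ) < 2 ^ q := by positivity
    rw [div_pow, one_pow, mul_one_div, div_le_one h2q]
    linarith
  have hqj : ((1:ℝ)/2) ^ q ≤ ((1:ℝ)/2) ^ (j+2) :=
    pow_le_pow_of_le_one (by norm_num) (by norm_num) hq
  have hpos : (0:ℝ) ≤ ((1:ℝ)/2)^q := by positivity
  have hq0 : (0:ℝ) ≤ (q:ℝ) := Nat.cast_nonneg q
  calc (4 * q : ℝ) * (3 / 5) ^ (4 * q - 1)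
      ≤ (4 * q : ℝ) * (((1:ℝ)/2) ^ q * ((1:ℝ)/2) ^ q) := by
        have := le_trans (le_trans h35 (le_of_eq h1)) h3
        apply mul_le_mul_of_nonneg_left this (by positivity)
    _ = 4 * ((q:ℝ) * ((1:ℝ)/2) ^ q) * ((1:ℝ)/2) ^ q := by ring
    _ ≤ 4 * 1 * ((1:ℝ)/2) ^ (j+2) := by
        apply mul_le_mul (by nlinarith) hqj hpos (by norm_num)
    _ = (1/2) ^ j := by ring

lemma aux_geom_half (n : ℕ) : ∑ i ∈ range n, ((1:ℝ)/2) ^ (i+1) ≤ 1 := by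
  have h : ∑ i ∈ range n, ((1:ℝ)/2) ^ (i+1) = (1/2) * ∑ i ∈ range n, ((1:ℝ)/2) ^ i := by
    rw [Finset.mul_sum]
    exact Finset.sum_congr rfl (fun i _ => by ring)
  rw [h]
  have := sum_geometric_two_le n
  linarith

lemma aux_pow32 (n : ℕ) (hn : 4 ≤ n) : (4:ℝ) ≤ (3/2) ^ n := by
  calc (4:ℝ) ≤ (3/2)^4 := by norm_num
  _ ≤ (3/2)^n := pow_le_pow_right₀ (by norm_num) hn

lemma aux_orbit (c z : ℂ) (hz : 4 * (Complex.abs c + 2) ≤ Complex.abs z) :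
    ∀ n, 2 ^ n * Complex.abs z ≤ Complex.abs (f0iter c n z) := by
  intro n
  induction n with
  | zero => simp [f0iter]
  | succ n ih =>
      have hsq : f0iter c (n+1) z = (f0iter c n z) ^ 2 + c := by
        simp [f0iter, Function.iterate_succ_apply']
      rw [hsq]
      set w := f0iter c n z with hw
      have htri : Complex.abs (w ^ 2) ≤ Complex.abs (w ^ 2 + c) + Complex.abs c := by
        calc Complex.abs (w ^ 2) = Complex.abs ((w ^ 2 + c) + (-c)) := by congr 1; ring
        _ ≤ Complex.abs (w ^ 2 + c) + Complex.abs (-c) := Complex.abs.add_le _ _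
        _ = Complex.abs (w ^ 2 + c) + Complex.abs c := by simp
      have habs : Complex.abs w ^ 2 - Complex.abs c ≤ Complex.abs (w ^ 2 + c) := by
        rw [← map_pow]; linarith
      have h1 : (1:ℝ) ≤ 2 ^ n := one_le_pow₀ (by norm_num)
      have hzpos : (0:ℝ) ≤ Complex.abs z := Complex.abs.nonneg z
      have hcpos : (0:ℝ) ≤ Complex.abs c := Complex.abs.nonneg c
      have hwge : 2 ^ n * Complex.abs z ≤ Complex.abs w := ih
      have hwz : Complex.abs z ≤ Complex.abs w := by nlinarith
      have hw8 : 8 ≤ Complex.abs w := by nlinarith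
      have key : 2 * Complex.abs w ≤ Complex.abs w ^ 2 - Complex.abs c := by nlinarith
      have h2 : (2:ℝ) ^ (n+1) * Complex.abs z = 2 * (2 ^ n * Complex.abs z) := by ring
      rw [h2]
      nlinarith

lemma aux_orbit_ne (c z : ℂ) (hz : 4 * (Complex.abs c + 2) ≤ Complex.abs z) (n : ℕ) :
    f0iter c n z ≠ 0 := by
  intro h
  have h1 := aux_orbit c z hz n
  rw [h, map_zero] at h1
  have h2 : (1:ℝ) ≤ 2 ^ n := one_le_pow₀ (by norm_num)
  have : (0:ℝ) ≤ Complex.abs c := Complex.abs.nonneg c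
  nlinarith

lemma aux_prod_perturb {ι : Type*} (s : Finset ι) (a : ι → ℂ) (e : ι → ℝ)
    (h : ∀ i ∈ s, Complex.abs (a i - 1) ≤ e i) (he : ∀ i ∈ s, 0 ≤ e i)
    (hs : ∑ i ∈ s, e i ≤ 1 / 2) :
    Complex.abs (∏ i ∈ s, a i - 1) ≤ 2 * ∑ i ∈ s, e i := by
  classical
  induction s using Finset.induction with
  | empty => simp
  | @insert i s his ih =>
      rw [Finset.prod_insert his, Finset.sum_insert his]
      have hei : 0 ≤ e i := he i (mem_insert_self i s)
      have hes : ∀ j ∈ s, 0 ≤ e j := fun j hj => he j (mem_insert_of_mem hj)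
      have hsum_nonneg : 0 ≤ ∑ j ∈ s, e j := Finset.sum_nonneg hes
      have hs' : ∑ j ∈ s, e j ≤ 1 / 2 := by
        rw [Finset.sum_insert his] at hs; linarith
      have ihs := ih (fun j hj => h j (mem_insert_of_mem hj)) hes hs'
      have hai : Complex.abs (a i - 1) ≤ e i := h i (mem_insert_self i s)
      have hP : Complex.abs (∏ j ∈ s, a j) ≤ 1 + 2 * ∑ j ∈ s, e j := by
        calc Complex.abs (∏ j ∈ s, a j)
            ≤ Complex.abs (∏ j ∈ s, a j - 1) + Complex.abs 1 := by
              have := Complex.abs.add_le (∏ j ∈ s, a j - 1) 1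
              simpa using this
          _ ≤ 1 + 2 * ∑ j ∈ s, e j := by simp at *; linarith
      calc Complex.abs (a i * ∏ j ∈ s, a j - 1)
          = Complex.abs ((a i - 1) * ∏ j ∈ s, a j + (∏ j ∈ s, a j - 1)) := by ring_nf
        _ ≤ Complex.abs ((a i - 1) * ∏ j ∈ s, a j) + Complex.abs (∏ j ∈ s, a j - 1) :=
            Complex.abs.add_le _ _
        _ = Complex.abs (a i - 1) * Complex.abs (∏ j ∈ s, a j) + Complex.abs (∏ j ∈ s, a j - 1) := by
            rw [map_mul]
        _ ≤ e i * (1 + 2 * ∑ j ∈ s, e j) + 2 * ∑ j ∈ s, e j := by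
            have h0 : (0:ℝ) ≤ Complex.abs (∏ j ∈ s, a j) := Complex.abs.nonneg _
            have := mul_le_mul hai hP h0 hei
            linarith
        _ ≤ 2 * (e i + ∑ j ∈ s, e j) := by nlinarith

lemma aux_re_frac (w : ℂ) (hw : 2 ≤ Complex.abs w) : 0 ≤ (w / (w - 1)).re := by
  have hw1 : 1 ≤ Complex.abs (w - 1) := by
    have := Complex.abs.add_le (w - 1) 1
    simp only [sub_add_cancel] at this
    linarith [Complex.abs.nonneg (w-1), map_one Complex.abs]
  have hne : w - 1 ≠ 0 := by
    intro h
    rw [h, map_zero] at hw1; linarith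
  have hid : w / (w - 1) = 1 + 1 / (w - 1) := by field_simp; ring
  rw [hid]
  have h2 : Complex.abs (1 / (w - 1)) ≤ 1 := by
    rw [map_div₀, map_one]
    rw [div_le_one (by linarith)]; linarith
  have h3 : |(1 / (w - 1)).re| ≤ 1 := le_trans (Complex.abs_re_le_abs _) h2
  have h4 : (1 + 1 / (w - 1)).re = 1 + (1 / (w - 1)).re := by simp
  rw [h4]
  have := abs_le.mp h3
  linarith

lemma aux_telescope (c : ℂ) (z : ℂ) (h : ∀ i, f0iter c i z ≠ 0) (n : ℕ) :
    z * ∏ i ∈ range n, f0iter c i z =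
      (∏ i ∈ range n, (f0iter c i z ^ 2 / f0iter c (i+1) z)) * f0iter c n z := by
  induction n with
  | zero => simp [f0iter]
  | succ n ih =>
      calc z * ∏ i ∈ range (n+1), f0iter c i z
          = (z * ∏ i ∈ range n, f0iter c i z) * f0iter c n z := by
            rw [Finset.prod_range_succ]; ring
        _ = ((∏ i ∈ range n, (f0iter c i z ^ 2 / f0iter c (i+1) z)) * f0iter c n z)
              * f0iter c n z := by rw [ih]
        _ = ((∏ i ∈ range n, (f0iter c i z ^ 2 / f0iter c (i+1) z))
              * (f0iter c n z ^ 2 / f0iter c (n+1) z)) * f0iter c (n+1) z := by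
            rw [mul_assoc, mul_assoc, div_mul_cancel₀ _ (h (n+1))]
            ring
        _ = (∏ i ∈ range (n+1), (f0iter c i z ^ 2 / f0iter c (i+1) z)) * f0iter c (n+1) z := by
            rw [Finset.prod_range_succ]

lemma aux_prod_Icc_range {M : Type*} [CommMonoid M] (f : ℕ → M) (k : ℕ) :
    ∏ i ∈ range k, f (i + 1) = ∏ j ∈ Icc 1 k, f j := by
  induction k with
  | zero => simp
  | succ k ih =>
      rw [Finset.prod_range_succ, ih, Finset.prod_Icc_succ_top (by omega)]

lemma f0iter_succ' (c : ℂ) (n : ℕ) (z : ℂ) :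
    f0iter c (n + 1) z = (f0iter c n z) ^ 2 + c := by
  simp [f0iter, Function.iterate_succ_apply']

lemma f0iter_continuous (c : ℂ) (n : ℕ) : Continuous (f0iter c n) := by
  unfold f0iter
  exact Continuous.iterate (by continuity) n

lemma hasDerivAt_f0iter (c : ℂ) (n : ℕ) (z : ℂ) :
    HasDerivAt (f0iter c n) (∏ i ∈ range n, (2 * f0iter c i z)) z := by
  induction n with
  | zero => simp only [Finset.prod_range_zero]; exact hasDerivAt_id z
  | succ n ih =>
      have h1 : HasDerivAt (fun w : ℂ => w ^ 2 + c) (2 * f0iter c n z) (f0iter c n z) := by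
        simpa using ((hasDerivAt_pow 2 (f0iter c n z)).add_const c)
      have h2 : f0iter c (n+1) = (fun w : ℂ => w ^ 2 + c) ∘ (f0iter c n) := by
        funext w; simp [f0iter, Function.iterate_succ_apply']
      rw [h2, Finset.prod_range_succ]
      have := h1.comp z ih
      rw [mul_comm]
      exact this

lemma hasDerivAt_Fseq (c : ℂ) (N : ℕ) (R : ℝ) (j : ℕ) (z : ℂ) :
    HasDerivAt (Fseq c N R j)
      (-((1/2 : ℂ) * ((nseq N j : ℂ) * (z / ((Rseq c N R j : ℝ) : ℂ)) ^ (nseq N j - 1)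
        * (1/((Rseq c N R j : ℝ) : ℂ))))) z := by
  have h1 : HasDerivAt (fun w : ℂ => w / ((Rseq c N R j : ℝ) : ℂ))
      (1/((Rseq c N R j : ℝ) : ℂ)) z := by
    simpa [div_eq_mul_inv] using (hasDerivAt_id z).div_const (((Rseq c N R j : ℝ)) : ℂ)
  have h2 := h1.pow (nseq N j)
  have h3 := (h2.const_mul ((1:ℂ)/2)).const_sub 1
  exact h3

lemma Fseq_continuous (c : ℂ) (N : ℕ) (R : ℝ) (j : ℕ) : Continuous (Fseq c N R j) := by
  unfold Fseq
  exact continuous_const.sub (continuous_const.mul ((continuous_id.div_const _).pow _))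

lemma fseq_continuous (c : ℂ) (N : ℕ) (R : ℝ) (k : ℕ) : Continuous (fseq c N R k) := by
  unfold fseq
  exact (f0iter_continuous c N).mul (continuous_finset_prod _ fun j _ => Fseq_continuous c N R j)

lemma nseq_big {N : ℕ} (hN : 10 ≤ N) (j : ℕ) : 512 ≤ nseq N j := by
  unfold nseq
  calc (512:ℕ) = 2 ^ 9 := by norm_num
  _ ≤ 2 ^ (N + j - 1) := Nat.pow_le_pow_right (by norm_num) (by omega)

lemma Rseq_succ_eq (c : ℂ) (N : ℕ) (R : ℝ) (k : ℕ) (hk : 1 ≤ k) :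
    Rseq c N R (k + 1) =
      sSup ((fun z => Complex.abs (fseq c N R k z)) ''
        Metric.sphere (0 : ℂ) (2 * Rseq c N R k)) := by
  obtain ⟨m, rfl⟩ := Nat.exists_eq_add_of_le' hk
  show Rseq c N R (m + 2) = _
  rw [Rseq]
  have hfun : (fun z : ℂ => Complex.abs (f0iter c N z *
        ∏ j ∈ (Finset.Icc 1 (m + 1)).attach,
          (1 - (1 / 2) * (z / ((Rseq c N R j.1 : ℝ) : ℂ)) ^ nseq N j.1)))
      = fun z => Complex.abs (fseq c N R (m+1) z) := by
    funext z
    simp only [fseq, Fseq]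
    rw [Finset.prod_attach (Finset.Icc 1 (m+1))
      (fun j => 1 - (1 / 2) * (z / ((Rseq c N R j : ℝ) : ℂ)) ^ nseq N j)]
  exact congrArg (fun h => sSup (h '' _)) hfun

lemma Rseq_growth (c : ℂ) (N : ℕ) (R : ℝ) (hN : 10 ≤ N)
    (hR : 4 * (Complex.abs c + 2) ≤ R) (hOB : OneBound c N R) :
    ∀ k, 1 ≤ k → R ≤ Rseq c N R k ∧ 5 * Rseq c N R k ≤ Rseq c N R (k + 1) := by
  have hc0 : (0:ℝ) ≤ Complex.abs c := Complex.abs.nonneg c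
  have hR8 : (8:ℝ) ≤ R := by linarith
  intro k
  induction k using Nat.strong_induction_on with
  | _ k IH =>
  intro hk
  have part1 : R ≤ Rseq c N R k := by
    match k, hk with
    | 1, _ => show R ≤ Rseq c N R 1; rw [Rseq]; linarith
    | (m+2), _ =>
        have hm := IH (m+1) (by omega) (by omega)
        linarith [hm.1, hm.2]
  refine ⟨part1, ?_⟩
  have mono' : ∀ d j, 1 ≤ j → j + d ≤ k → Rseq c N R j ≤ Rseq c N R (j + d) := by
    intro d
    induction d with
    | zero => intro j _ _; simp
    | succ d ihd =>
        intro j hj1 hjk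
        have h1 := IH (j + d) (by omega) (by omega)
        have h2 := ihd j hj1 (by omega)
        have h3 : Rseq c N R (j+d) ≤ Rseq c N R (j+d+1) := by linarith [h1.1, h1.2]
        have h4 : j + (d+1) = (j + d) + 1 := by omega
        rw [h4]
        linarith
  have mono : ∀ j, 1 ≤ j → j ≤ k → Rseq c N R j ≤ Rseq c N R k := by
    intro j hj1 hjk
    have := mono' (k - j) j hj1 (by omega)
    have hkj : j + (k - j) = k := by omega
    rwa [hkj] at this
  set ρ := Rseq c N R k with hρ
  have hρR : R ≤ ρ := part1
  have hρ8 : (8:ℝ) ≤ ρ := by linarith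
  have hρpos : (0:ℝ) < ρ := by linarith
  rw [Rseq_succ_eq c N R k hk]
  set z₀ : ℂ := ((2*ρ : ℝ) : ℂ) with hz₀
  have habsz₀ : Complex.abs z₀ = 2*ρ := by
    rw [hz₀, Complex.abs_ofReal, abs_of_pos (by linarith)]
  have hz₀mem : z₀ ∈ Metric.sphere (0:ℂ) (2*ρ) := by
    simp only [Metric.mem_sphere, Complex.dist_eq, sub_zero]
    exact habsz₀
  have hbdd : BddAbove ((fun z => Complex.abs (fseq c N R k z)) ''
      Metric.sphere (0:ℂ) (2*ρ)) := by
    apply IsCompact.bddAbove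
    apply (isCompact_sphere (0:ℂ) (2*ρ)).image
    exact Complex.continuous_abs.comp (fseq_continuous c N R k)
  have hle : Complex.abs (fseq c N R k z₀) ≤
      sSup ((fun z => Complex.abs (fseq c N R k z)) '' Metric.sphere (0:ℂ) (2*ρ)) :=
    le_csSup hbdd ⟨z₀, hz₀mem, rfl⟩
  have hOB₀ := (hOB z₀ (by rw [Complex.norm_eq_abs, habsz₀]; linarith)).1
  have hpow_pos : (0:ℝ) < Complex.abs z₀ ^ 2 ^ N := by rw [habsz₀]; positivity
  have hf0 : (1/2) * (2*ρ) ^ 2 ^ N ≤ Complex.abs (f0iter c N z₀) := by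
    have h' := (le_div_iff₀ hpow_pos).mp hOB₀
    calc (1/2) * (2*ρ) ^ 2 ^ N = 1 / 2 * Complex.abs z₀ ^ 2 ^ N := by rw [habsz₀]
    _ ≤ Complex.abs (f0iter c N z₀) := h'
  have hF : ∀ j ∈ Icc 1 k, 1 ≤ Complex.abs (Fseq c N R j z₀) := by
    intro j hj
    rw [Finset.mem_Icc] at hj
    have hRj : R ≤ Rseq c N R j := by
      match j, hj.1 with
      | 1, _ => show R ≤ Rseq c N R 1; rw [Rseq]; linarith
      | (m+2), _ =>
          have hm := IH (m+1) (by omega) (by omega)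
          linarith [hm.1, hm.2]
    have hRjk : Rseq c N R j ≤ ρ := mono j hj.1 hj.2
    have hRjpos : (0:ℝ) < Rseq c N R j := by linarith
    have ht : (2:ℝ) ≤ Complex.abs (z₀ / ((Rseq c N R j : ℝ):ℂ)) := by
      rw [map_div₀, habsz₀, Complex.abs_ofReal, abs_of_pos hRjpos]
      rw [le_div_iff₀ hRjpos]
      linarith
    have hw : (8:ℝ) ≤ Complex.abs ((1/2 : ℂ) * (z₀ / ((Rseq c N R j : ℝ):ℂ)) ^ nseq N j) := by
      rw [map_mul, map_pow]
      have h12 : Complex.abs (1/2 : ℂ) = 1/2 := by norm_num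
      rw [h12]
      have hn : 4 ≤ nseq N j := le_trans (by norm_num) (nseq_big hN j)
      have h16 : (16:ℝ) ≤ Complex.abs (z₀ / ((Rseq c N R j : ℝ):ℂ)) ^ nseq N j := by
        calc (16:ℝ) = 2^4 := by norm_num
        _ ≤ 2 ^ nseq N j := pow_le_pow_right₀ (by norm_num) hn
        _ ≤ _ := pow_le_pow_left₀ (by norm_num) ht _
      linarith
    unfold Fseq
    set w : ℂ := 1/2 * (z₀ / ((Rseq c N R j : ℝ):ℂ)) ^ nseq N j with hwdef
    have htr : Complex.abs w ≤ Complex.abs (w - 1) + 1 := by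
      have := Complex.abs.add_le (w - 1) 1
      simpa using this
    have heq : Complex.abs (1 - w) = Complex.abs (w - 1) := by
      rw [show (1 - w : ℂ) = -(w - 1) by ring, Complex.abs.map_neg]
    rw [heq]
    linarith
  have hprod : 1 ≤ Complex.abs (∏ j ∈ Icc 1 k, Fseq c N R j z₀) := by
    rw [map_prod]
    calc (1:ℝ) = ∏ _j ∈ Icc 1 k, (1:ℝ) := by simp
    _ ≤ ∏ j ∈ Icc 1 k, Complex.abs (Fseq c N R j z₀) :=
        Finset.prod_le_prod (by intros; norm_num) hF
  have hfs : 5 * ρ ≤ Complex.abs (fseq c N R k z₀) := by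
    unfold fseq
    rw [map_mul]
    have h2ρ : (1:ℝ) ≤ 2*ρ := by linarith
    have hpow2 : (2*ρ)^2 ≤ (2*ρ) ^ 2 ^ N := by
      apply pow_le_pow_right₀ h2ρ
      calc 2 = 2^1 := by norm_num
      _ ≤ 2^N := Nat.pow_le_pow_right (by norm_num) (by omega)
    have hf0' : 2 * ρ^2 ≤ Complex.abs (f0iter c N z₀) := by
      nlinarith [hf0, hpow2]
    calc 5 * ρ ≤ 2 * ρ^2 := by nlinarith
    _ ≤ Complex.abs (f0iter c N z₀) := hf0'
    _ ≤ Complex.abs (f0iter c N z₀) * Complex.abs (∏ j ∈ Icc 1 k, Fseq c N R j z₀) := by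
        nlinarith [Complex.abs.nonneg (f0iter c N z₀)]
  linarith

lemma Rseq_mono (c : ℂ) (N : ℕ) (R : ℝ) (hN : 10 ≤ N)
    (hR : 4 * (Complex.abs c + 2) ≤ R) (hOB : OneBound c N R) :
    ∀ i j, 1 ≤ i → i ≤ j → Rseq c N R i ≤ Rseq c N R j := by
  have hc0 : (0:ℝ) ≤ Complex.abs c := Complex.abs.nonneg c
  have hR8 : (8:ℝ) ≤ R := by linarith
  intro i j hi hij
  obtain ⟨d, rfl⟩ := Nat.exists_eq_add_of_le hij
  induction d with
  | zero => simp
  | succ d ihd =>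
      have h1 := Rseq_growth c N R hN hR hOB (i + d) (by omega)
      have h2 := ihd (by omega)
      have h3 : i + (d+1) = (i + d) + 1 := by omega
      rw [h3]
      linarith [h1.1, h1.2]

lemma Rseq_tail (c : ℂ) (N : ℕ) (R : ℝ) (hN : 10 ≤ N)
    (hR : 4 * (Complex.abs c + 2) ≤ R) (hOB : OneBound c N R)
    (k j : ℕ) (hk : 1 ≤ k) (hkj : k < j) :
    5 * Rseq c N R k ≤ Rseq c N R j := by
  have h1 := (Rseq_growth c N R hN hR hOB k hk).2
  have h2 := Rseq_mono c N R hN hR hOB (k+1) j (by omega) (by omega)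
  linarith

end AuxLemmas

set_option maxHeartbeats 1000000 in
/-- There is `R₀ > 0` (depending only on `c`, `N`) such that for `R ≥ R₀` and every
`k ≥ 1`, `f'` is nonzero on `V_k = {z : 3R_k/2 ≤ |z| ≤ 5R_k/2}`. -/
theorem stmt13 (c : ℂ) (N : ℕ) (hN : 10 ≤ N) :
    ∃ R₀ : ℝ, 0 < R₀ ∧
      ∀ R : ℝ, R₀ ≤ R → OneBound c N R →
        ∀ k : ℕ, 1 ≤ k → ∀ z : ℂ,
          3 * Rseq c N R k / 2 ≤ ‖z‖ → ‖z‖ ≤ 5 * Rseq c N R k / 2 →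
          deriv (flim c N R) z ≠ 0 := by
  refine ⟨4 * (Complex.abs c + 2), by positivity, ?_⟩
  intro R hR hOB k hk z hz1 hz2
  have hc0 : (0:ℝ) ≤ Complex.abs c := Complex.abs.nonneg c
  have hR8 : (8:ℝ) ≤ R := by linarith
  have hRc : 4 * (Complex.abs c + 2) ≤ R := hR
  have hgrow := Rseq_growth c N R hN hRc hOB
  have hmono := Rseq_mono c N R hN hRc hOB
  have htail := Rseq_tail c N R hN hRc hOB
  have hrkR : R ≤ Rseq c N R k := (hgrow k hk).1
  have hrk8 : (8:ℝ) ≤ Rseq c N R k := le_trans hR8 hrkR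
  have hrkpos : (0:ℝ) < Rseq c N R k := by linarith
  have hzabs : 3 * Rseq c N R k / 2 ≤ Complex.abs z := hz1
  have hzabs2 : Complex.abs z ≤ 5 * Rseq c N R k / 2 := hz2
  have hzR : R ≤ Complex.abs z := by linarith
  have hz_c : 4 * (Complex.abs c + 2) ≤ Complex.abs z := le_trans hRc hzR
  have hz0 : z ≠ 0 := by
    intro h; rw [h, map_zero] at hzabs; linarith
  have hzball : z ∈ Metric.ball (0:ℂ) (3 * Rseq c N R k) := by
    simp only [Metric.mem_ball, Complex.dist_eq, sub_zero, Complex.norm_eq_abs]; linarith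
  have h0ball : (0:ℂ) ∈ Metric.ball (0:ℂ) (3 * Rseq c N R k) := by
    simp only [Metric.mem_ball, dist_self]; linarith
  have htail5 : ∀ j : ℕ, 5 * Rseq c N R k ≤ Rseq c N R (j + k + 1) :=
    fun j => htail k (j+k+1) hk (by omega)
  have htailpos : ∀ j : ℕ, (0:ℝ) < Rseq c N R (j + k + 1) := fun j => by linarith [htail5 j]
  have hnbig : ∀ j : ℕ, 512 ≤ nseq N j := nseq_big hN
  -- tail log functions and their derivatives
  set g : ℕ → ℂ → ℂ := fun j w => Complex.log (Fseq c N R (j + k + 1) w) with hgdef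
  set g' : ℕ → ℂ → ℂ := fun j w => (Fseq c N R (j + k + 1) w)⁻¹ *
      (-((1/2 : ℂ) * ((nseq N (j + k + 1) : ℂ) *
        (w / ((Rseq c N R (j + k + 1) : ℝ) : ℂ)) ^ (nseq N (j + k + 1) - 1)
        * (1/((Rseq c N R (j + k + 1) : ℝ) : ℂ))))) with hg'def
  -- master numeric bound
  have hq : ∀ j : ℕ, ((nseq N (j+k+1)):ℝ) * (3/5) ^ (nseq N (j+k+1) - 1) ≤ (1/2)^j := by
    intro j
    have hn4q : nseq N (j+k+1) = 4 * 2 ^ (N + k + j - 2) := by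
      unfold nseq
      have h1 : N + (j + k + 1) - 1 = (N+k+j-2) + 2 := by omega
      rw [h1, pow_add]
      ring
    have hqge : j + 2 ≤ 2 ^ (N + k + j - 2) := by
      have := Nat.lt_two_pow_self (n := N + k + j - 2)
      omega
    have hm := aux_master (2 ^ (N + k + j - 2)) j hqge
    rw [hn4q]
    push_cast
    push_cast at hm
    exact hm
  -- smallness of tail factors on the ball
  have hsmall : ∀ (j : ℕ) (w : ℂ), w ∈ Metric.ball (0:ℂ) (3 * Rseq c N R k) →
      Complex.abs (Fseq c N R (j+k+1) w - 1)
        ≤ (1/2) * (3/5) ^ (nseq N (j+k+1)) := by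
    intro j w hw
    have habsw : Complex.abs w < 3 * Rseq c N R k := by
      simpa [Complex.dist_eq] using hw
    have hRj := htail5 j
    have hRjpos := htailpos j
    have ht : Complex.abs (w / ((Rseq c N R (j+k+1) : ℝ):ℂ)) ≤ 3/5 := by
      rw [map_div₀, Complex.abs_ofReal, abs_of_pos hRjpos, div_le_iff₀ hRjpos]
      nlinarith
    have heq : Fseq c N R (j+k+1) w - 1
        = -((1/2:ℂ) * (w / ((Rseq c N R (j+k+1) : ℝ):ℂ)) ^ nseq N (j+k+1)) := by
      unfold Fseq; ring
    rw [heq, Complex.abs.map_neg, map_mul, map_pow]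
    have h12 : Complex.abs ((1:ℂ)/2) = 1/2 := by norm_num
    rw [h12]
    have := pow_le_pow_left₀ (Complex.abs.nonneg _) ht (nseq N (j+k+1))
    nlinarith [pow_nonneg (Complex.abs.nonneg (w / ((Rseq c N R (j+k+1) : ℝ):ℂ))) (nseq N (j+k+1))]
  have hsmall8 : ∀ (j : ℕ) (w : ℂ), w ∈ Metric.ball (0:ℂ) (3 * Rseq c N R k) →
      Complex.abs (Fseq c N R (j+k+1) w - 1) ≤ 1/8 := by
    intro j w hw
    have h1 := hsmall j w hw
    have h2 : ((3:ℝ)/5) ^ (nseq N (j+k+1)) ≤ (3/5:ℝ)^4 :=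
      pow_le_pow_of_le_one (by norm_num) (by norm_num) (by linarith [hnbig (j+k+1)])
    nlinarith
  have hFfacts : ∀ (j : ℕ) (w : ℂ), w ∈ Metric.ball (0:ℂ) (3 * Rseq c N R k) →
      Fseq c N R (j+k+1) w ≠ 0 ∧
      Complex.abs ((Fseq c N R (j+k+1) w)⁻¹) ≤ 2 ∧
      Fseq c N R (j+k+1) w ∈ Complex.slitPlane := by
    intro j w hw
    have h8 := hsmall8 j w hw
    have habsF : (1/2:ℝ) ≤ Complex.abs (Fseq c N R (j+k+1) w) := by
      have htr : Complex.abs (1:ℂ) ≤ Complex.abs (Fseq c N R (j+k+1) w)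
          + Complex.abs (Fseq c N R (j+k+1) w - 1) := by
        calc Complex.abs (1:ℂ)
            = Complex.abs (Fseq c N R (j+k+1) w + -(Fseq c N R (j+k+1) w - 1)) := by
              congr 1; ring
          _ ≤ _ + Complex.abs (-(Fseq c N R (j+k+1) w - 1)) := Complex.abs.add_le _ _
          _ = _ + Complex.abs (Fseq c N R (j+k+1) w - 1) := by rw [Complex.abs.map_neg]
      simp only [map_one] at htr
      linarith
    have hFne : Fseq c N R (j+k+1) w ≠ 0 := by
      intro h; rw [h, map_zero] at habsF; linarith
    refine ⟨hFne, ?_, ?_⟩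
    · rw [map_inv₀]
      calc (Complex.abs (Fseq c N R (j+k+1) w))⁻¹ ≤ (1/2:ℝ)⁻¹ := by
            apply inv_anti₀ (by norm_num) habsF
        _ = 2 := by norm_num
    · have hlt : ‖Fseq c N R (j+k+1) w - 1‖ < 1 := by
        rw [Complex.norm_eq_abs]; linarith
      have := Complex.mem_slitPlane_of_norm_lt_one hlt
      simpa using this
  -- derivatives of the tail logs on the ball
  have hgderiv : ∀ (j : ℕ) (w : ℂ), w ∈ Metric.ball (0:ℂ) (3 * Rseq c N R k) →
      HasDerivAt (g j) (g' j w) w := by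
    intro j w hw
    have hF := hasDerivAt_Fseq c N R (j+k+1) w
    have hslit := (hFfacts j w hw).2.2
    simp only [hgdef, hg'def]
    exact (Complex.hasDerivAt_log hslit).comp w hF
  have hg'bound : ∀ (j : ℕ) (w : ℂ), w ∈ Metric.ball (0:ℂ) (3 * Rseq c N R k) →
      ‖g' j w‖ ≤ (1/2)^j := by
    intro j w hw
    have habsw : Complex.abs w < 3 * Rseq c N R k := by
      simpa [Complex.dist_eq] using hw
    have hRj := htail5 j
    have hRjpos := htailpos j
    have ht : Complex.abs (w / ((Rseq c N R (j+k+1) : ℝ):ℂ)) ≤ 3/5 := by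
      rw [map_div₀, Complex.abs_ofReal, abs_of_pos hRjpos, div_le_iff₀ hRjpos]
      nlinarith
    have hinv2 := (hFfacts j w hw).2.1
    have hRinv : Complex.abs (1/((Rseq c N R (j+k+1) : ℝ):ℂ)) ≤ 1 := by
      rw [map_div₀, map_one, Complex.abs_ofReal, abs_of_pos hRjpos]
      rw [div_le_one hRjpos]
      linarith
    rw [Complex.norm_eq_abs, hg'def]
    simp only []
    rw [map_mul, Complex.abs.map_neg, map_mul, map_mul, map_mul, map_pow]
    have h12 : Complex.abs ((1:ℂ)/2) = 1/2 := by norm_num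
    have hn : Complex.abs ((nseq N (j+k+1) : ℂ)) = (nseq N (j+k+1) : ℝ) := by
      rw [Complex.abs_natCast]
    rw [h12, hn]
    have htpow : Complex.abs (w / ((Rseq c N R (j+k+1) : ℝ):ℂ)) ^ (nseq N (j+k+1) - 1)
        ≤ (3/5:ℝ) ^ (nseq N (j+k+1) - 1) :=
      pow_le_pow_left₀ (Complex.abs.nonneg _) ht _
    have hnn : (0:ℝ) ≤ (nseq N (j+k+1) : ℝ) := Nat.cast_nonneg _
    have hq' := hq j
    have hb1 : (0:ℝ) ≤ Complex.abs (w / ((Rseq c N R (j+k+1) : ℝ):ℂ)) ^ (nseq N (j+k+1) - 1) :=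
      pow_nonneg (Complex.abs.nonneg _) _
    have h35 : (0:ℝ) ≤ (3/5:ℝ) ^ (nseq N (j+k+1) - 1) := by positivity
    calc Complex.abs ((Fseq c N R (j+k+1) w)⁻¹) * (1/2 * ((nseq N (j+k+1) : ℝ) *
          Complex.abs (w / ((Rseq c N R (j+k+1) : ℝ):ℂ)) ^ (nseq N (j+k+1) - 1) *
          Complex.abs (1/((Rseq c N R (j+k+1) : ℝ):ℂ))))
        ≤ 2 * (1/2 * ((nseq N (j+k+1) : ℝ) * (3/5:ℝ) ^ (nseq N (j+k+1) - 1) * 1)) := by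
          apply mul_le_mul hinv2 _ (by positivity) (by norm_num)
          apply mul_le_mul_of_nonneg_left _ (by norm_num)
          apply mul_le_mul (mul_le_mul_of_nonneg_left htpow hnn) hRinv (Complex.abs.nonneg _)
          positivity
      _ = (nseq N (j+k+1) : ℝ) * (3/5:ℝ) ^ (nseq N (j+k+1) - 1) := by ring
      _ ≤ (1/2)^j := hq'
  have hgbound : ∀ (j : ℕ) (w : ℂ), w ∈ Metric.ball (0:ℂ) (3 * Rseq c N R k) →
      ‖g j w‖ ≤ (1/2)^j := by
    intro j w hw
    have h8 := hsmall8 j w hw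
    have hlog : ‖Complex.log (1 + (Fseq c N R (j+k+1) w - 1))‖
        ≤ (3/2) * ‖Fseq c N R (j+k+1) w - 1‖ := by
      apply Complex.norm_log_one_add_half_le_self
      rw [Complex.norm_eq_abs]; linarith
    have heq : (1 : ℂ) + (Fseq c N R (j+k+1) w - 1) = Fseq c N R (j+k+1) w := by ring
    rw [heq] at hlog
    have hsm := hsmall j w hw
    have h35n : ((3:ℝ)/5) ^ (nseq N (j+k+1)) ≤
        ((nseq N (j+k+1)):ℝ) * (3/5) ^ (nseq N (j+k+1) - 1) := by
      have hpow : ((3:ℝ)/5) ^ (nseq N (j+k+1))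
          = (3/5:ℝ) ^ (nseq N (j+k+1) - 1) * (3/5) := by
        rw [← pow_succ]
        congr 1
        have := hnbig (j+k+1); omega
      rw [hpow]
      have h1n : (1:ℝ) ≤ ((nseq N (j+k+1)):ℝ) := by
        have := hnbig (j+k+1); exact_mod_cast by omega
      nlinarith [pow_nonneg (show (0:ℝ) ≤ 3/5 by norm_num) (nseq N (j+k+1) - 1)]
    have hq' := hq j
    rw [Complex.norm_eq_abs] at hlog ⊢
    simp only [hgdef]
    calc Complex.abs (Complex.log (Fseq c N R (j+k+1) w))
        ≤ (3/2) * Complex.abs (Fseq c N R (j+k+1) w - 1) := hlog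
      _ ≤ (3/2) * ((1/2) * (3/5) ^ (nseq N (j+k+1))) := by linarith
      _ ≤ (3/5:ℝ) ^ (nseq N (j+k+1)) := by
          nlinarith [pow_nonneg (show (0:ℝ) ≤ 3/5 by norm_num) (nseq N (j+k+1))]
      _ ≤ ((nseq N (j+k+1)):ℝ) * (3/5) ^ (nseq N (j+k+1) - 1) := h35n
      _ ≤ (1/2)^j := hq'
  have hu : Summable (fun j : ℕ => ((1:ℝ)/2)^j) :=
    summable_geometric_of_lt_one (by norm_num) (by norm_num)
  have hg0 : Summable (fun j => g j 0) := by
    apply Summable.congr summable_zero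
    intro j
    have hF0 : Fseq c N R (j+k+1) 0 = 1 := by
      unfold Fseq
      have hn : nseq N (j+k+1) ≠ 0 := by have := hnbig (j+k+1); omega
      rw [zero_div, zero_pow hn, mul_zero, sub_zero]
    simp only [hgdef]
    rw [hF0, Complex.log_one]
  set Sfun : ℂ → ℂ := fun w => ∑' j, g j w with hSdef
  have hSderiv : HasDerivAt Sfun (∑' j, g' j z) z :=
    hasDerivAt_tsum_of_isPreconnected hu Metric.isOpen_ball
      (convex_ball (0:ℂ) (3 * Rseq c N R k)).isPreconnected
      hgderiv hg'bound h0ball hg0 hzball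
  -- representation of flim on the ball
  have hrep : ∀ w ∈ Metric.ball (0:ℂ) (3 * Rseq c N R k),
      flim c N R w = fseq c N R k w * Complex.exp (Sfun w) := by
    intro w hw
    have hsum : Summable (fun j => g j w) :=
      Summable.of_norm_bounded hu (fun j => hgbound j w hw)
    have hhs : HasSum (fun j => g j w) (Sfun w) := hsum.hasSum
    have htends : Filter.Tendsto (fun s : Finset ℕ => Complex.exp (∑ j ∈ s, g j w))
        Filter.atTop (nhds (Complex.exp (Sfun w))) :=
      (Complex.continuous_exp.tendsto (Sfun w)).comp hhs
    have hprod_tail : HasProd (fun j : ℕ => Fseq c N R (j + k + 1) w)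
        (Complex.exp (Sfun w)) := by
      apply htends.congr
      intro s
      rw [Complex.exp_sum]
      exact Finset.prod_congr rfl fun j _ => Complex.exp_log ((hFfacts j w hw).1)
    have hprod_full : HasProd (fun j : ℕ => Fseq c N R (j + 1) w)
        ((∏ i ∈ Finset.range k, Fseq c N R (i + 1) w) * Complex.exp (Sfun w)) :=
      HasProd.prod_range_mul hprod_tail
    have htp := hprod_full.tprod_eq
    show f0iter c N w * ∏' (j : ℕ), Fseq c N R (j + 1) w = _
    rw [htp, aux_prod_Icc_range (fun i => Fseq c N R i w) k]
    show _ = f0iter c N w * (∏ j ∈ Finset.Icc 1 k, Fseq c N R j w) * Complex.exp (Sfun w)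
    ring
  have hEq : flim c N R =ᶠ[nhds z] (fun w => fseq c N R k w * Complex.exp (Sfun w)) := by
    filter_upwards [Metric.isOpen_ball.mem_nhds hzball] with w hw
    exact hrep w hw
  -- head factor facts at z
  have hf0ne : f0iter c N z ≠ 0 := aux_orbit_ne c z hz_c N
  have hhead : ∀ j ∈ Finset.Icc 1 k, Fseq c N R j z ≠ 0 ∧
      0 ≤ (z * logDeriv (Fseq c N R j) z).re := by
    intro j hj
    rw [Finset.mem_Icc] at hj
    have hRjR : R ≤ Rseq c N R j := (hgrow j hj.1).1
    have hRjk : Rseq c N R j ≤ Rseq c N R k := hmono j k hj.1 hj.2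
    have hRjpos : (0:ℝ) < Rseq c N R j := by linarith
    have hnj := hnbig j
    have habsr : Complex.abs ((Rseq c N R j : ℝ) : ℂ) = Rseq c N R j := by
      rw [Complex.abs_ofReal, abs_of_pos hRjpos]
    have ht : (3/2:ℝ) ≤ Complex.abs (z / ((Rseq c N R j : ℝ):ℂ)) := by
      rw [map_div₀, habsr, le_div_iff₀ hRjpos]
      nlinarith
    have hwabs : (2:ℝ) ≤ Complex.abs ((1/2:ℂ) * (z / ((Rseq c N R j : ℝ):ℂ)) ^ nseq N j) := by
      rw [map_mul, map_pow]
      have h12 : Complex.abs ((1:ℂ)/2) = 1/2 := by norm_num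
      rw [h12]
      have h4n : (4:ℝ) ≤ Complex.abs (z / ((Rseq c N R j : ℝ):ℂ)) ^ nseq N j :=
        le_trans (aux_pow32 (nseq N j) (by omega))
          (pow_le_pow_left₀ (by norm_num) ht (nseq N j))
      linarith
    set w : ℂ := (1/2:ℂ) * (z / ((Rseq c N R j : ℝ):ℂ)) ^ nseq N j with hwdef
    have hF_eq : Fseq c N R j z = 1 - w := rfl
    have h1w : (1:ℝ) ≤ Complex.abs (1 - w) := by
      have htr : Complex.abs w ≤ Complex.abs (w - 1) + 1 := by
        have := Complex.abs.add_le (w - 1) 1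
        simpa using this
      have heq2 : Complex.abs (1 - w) = Complex.abs (w - 1) := by
        rw [show (1 - w : ℂ) = -(w - 1) by ring, Complex.abs.map_neg]
      rw [heq2]
      linarith
    have hFne : Fseq c N R j z ≠ 0 := by
      rw [hF_eq]
      intro h
      rw [h, map_zero] at h1w
      linarith
    refine ⟨hFne, ?_⟩
    have hne1w : (1 - w : ℂ) ≠ 0 := by rw [← hF_eq]; exact hFne
    have hnew1 : (w - 1 : ℂ) ≠ 0 := by
      intro h
      apply hne1w
      rw [show (1 - w : ℂ) = -(w - 1) by ring, h, neg_zero]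
    have hD := hasDerivAt_Fseq c N R j z
    have hld : logDeriv (Fseq c N R j) z
        = (-((1/2:ℂ) * ((nseq N j : ℂ) * (z / ((Rseq c N R j : ℝ):ℂ)) ^ (nseq N j - 1)
            * (1/((Rseq c N R j : ℝ):ℂ))))) / (1 - w) := by
      rw [logDeriv_apply, hD.deriv, hF_eq]
    have hpow : (z / ((Rseq c N R j : ℝ):ℂ))^(nseq N j - 1) * (z / ((Rseq c N R j : ℝ):ℂ))
        = (z / ((Rseq c N R j : ℝ):ℂ))^(nseq N j) := by
      rw [← pow_succ]
      congr 1
      omega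
    have hzD : z * (-((1/2:ℂ) * ((nseq N j : ℂ) * (z / ((Rseq c N R j : ℝ):ℂ)) ^ (nseq N j - 1)
        * (1/((Rseq c N R j : ℝ):ℂ))))) = -((nseq N j : ℂ) * w) := by
      rw [hwdef]
      calc z * (-((1/2:ℂ) * ((nseq N j : ℂ) * (z / ((Rseq c N R j : ℝ):ℂ)) ^ (nseq N j - 1)
            * (1/((Rseq c N R j : ℝ):ℂ)))))
          = -((nseq N j : ℂ) * ((1/2:ℂ) * ((z / ((Rseq c N R j : ℝ):ℂ)) ^ (nseq N j - 1)
              * (z * (1/((Rseq c N R j : ℝ):ℂ)))))) := by ring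
        _ = -((nseq N j : ℂ) * ((1/2:ℂ) * ((z / ((Rseq c N R j : ℝ):ℂ)) ^ (nseq N j - 1)
              * (z / ((Rseq c N R j : ℝ):ℂ))))) := by rw [mul_one_div]
        _ = -((nseq N j : ℂ) * ((1/2:ℂ) * (z / ((Rseq c N R j : ℝ):ℂ)) ^ (nseq N j))) := by
              rw [hpow]
    have hfinal : z * logDeriv (Fseq c N R j) z = (nseq N j : ℂ) * (w / (w - 1)) := by
      rw [hld, ← mul_div_assoc, hzD]
      field_simp
      ring
    rw [hfinal]
    have hre : ((nseq N j : ℂ) * (w/(w-1))).re = (nseq N j : ℝ) * (w/(w-1)).re := by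
      simp [Complex.mul_re]
    rw [hre]
    exact mul_nonneg (Nat.cast_nonneg _) (aux_re_frac w hwabs)
  -- product over head factors
  set Pfun : ℂ → ℂ := fun w => ∏ j ∈ Finset.Icc 1 k, Fseq c N R j w with hPdef
  have hPne : Pfun z ≠ 0 := by
    rw [hPdef]
    exact Finset.prod_ne_zero_iff.mpr (fun j hj => (hhead j hj).1)
  have hdFj : ∀ j ∈ Finset.Icc 1 k, DifferentiableAt ℂ (Fseq c N R j) z :=
    fun j _ => (hasDerivAt_Fseq c N R j z).differentiableAt
  have hPdiff : DifferentiableAt ℂ Pfun z := by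
    rw [hPdef]
    exact (HasDerivAt.fun_finsetProd
      (fun j _ => hasDerivAt_Fseq c N R j z)).differentiableAt
  have hlogP : logDeriv Pfun z = ∑ j ∈ Finset.Icc 1 k, logDeriv (Fseq c N R j) z := by
    rw [hPdef]
    exact logDeriv_prod (fun j hj => (hhead j hj).1) hdFj
  have hdf0 : DifferentiableAt ℂ (f0iter c N) z := (hasDerivAt_f0iter c N z).differentiableAt
  have hfseq_eq : fseq c N R k = fun w => f0iter c N w * Pfun w := by
    funext w
    rw [hPdef]
    rfl
  have hfseqne : fseq c N R k z ≠ 0 := by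
    rw [hfseq_eq]
    exact mul_ne_zero hf0ne hPne
  have hfseqdiff : DifferentiableAt ℂ (fseq c N R k) z := by
    rw [hfseq_eq]
    exact hdf0.mul hPdiff
  have hlog1 : logDeriv (fseq c N R k) z = logDeriv (f0iter c N) z + logDeriv Pfun z := by
    rw [hfseq_eq]
    exact logDeriv_mul z hf0ne hPne hdf0 hPdiff
  -- exp of Sfun
  have hexpD : HasDerivAt (fun w => Complex.exp (Sfun w))
      (Complex.exp (Sfun z) * (∑' j, g' j z)) z :=
    (Complex.hasDerivAt_exp (Sfun z)).comp z hSderiv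
  have hlogexp : logDeriv (fun w => Complex.exp (Sfun w)) z = ∑' j, g' j z := by
    rw [logDeriv_apply, hexpD.deriv]
    exact mul_div_cancel_left₀ _ (Complex.exp_ne_zero _)
  -- total log derivative
  have hlogflim : logDeriv (flim c N R) z
      = logDeriv (f0iter c N) z + (∑ j ∈ Finset.Icc 1 k, logDeriv (Fseq c N R j) z)
        + (∑' j, g' j z) := by
    have hd1 : deriv (flim c N R) z
        = deriv (fun w => fseq c N R k w * Complex.exp (Sfun w)) z := hEq.deriv_eq
    have hv : flim c N R z = fseq c N R k z * Complex.exp (Sfun z) := hrep z hzball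
    have hsplit : logDeriv (fun w => fseq c N R k w * Complex.exp (Sfun w)) z
        = logDeriv (fseq c N R k) z + logDeriv (fun w => Complex.exp (Sfun w)) z :=
      logDeriv_mul z hfseqne (Complex.exp_ne_zero _) hfseqdiff hexpD.differentiableAt
    rw [logDeriv_apply, hd1, hv, ← logDeriv_apply, hsplit, hlog1, hlogexp, hlogP]
  -- Re of A
  have horbit : ∀ i, f0iter c i z ≠ 0 := fun i => aux_orbit_ne c z hz_c i
  have hA : z * logDeriv (f0iter c N) z
      = (2:ℂ)^N * ∏ i ∈ Finset.range N, (f0iter c i z^2 / f0iter c (i+1) z) := by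
    rw [logDeriv_apply, (hasDerivAt_f0iter c N z).deriv]
    rw [Finset.prod_mul_distrib, Finset.prod_const, Finset.card_range]
    have hts := aux_telescope c z horbit N
    calc z * (((2:ℂ)^N * ∏ i ∈ Finset.range N, f0iter c i z) / f0iter c N z)
        = (2:ℂ)^N * ((z * ∏ i ∈ Finset.range N, f0iter c i z) / f0iter c N z) := by
          ring
      _ = (2:ℂ)^N * (((∏ i ∈ Finset.range N, (f0iter c i z^2 / f0iter c (i+1) z))
            * f0iter c N z) / f0iter c N z) := by rw [hts]
      _ = (2:ℂ)^N * ∏ i ∈ Finset.range N, (f0iter c i z^2 / f0iter c (i+1) z) := by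
          rw [mul_div_cancel_right₀ _ (horbit N)]
  have ha1 : ∀ i, (f0iter c i z^2 / f0iter c (i+1) z) - 1 = -c / f0iter c (i+1) z := by
    intro i
    have h6 := f0iter_succ' c i z
    rw [div_sub_one (horbit (i+1))]
    congr 1
    rw [h6]
    ring
  have hae : ∀ i ∈ Finset.range N, Complex.abs ((f0iter c i z^2 / f0iter c (i+1) z) - 1)
      ≤ (Complex.abs c / R) * (1/2)^(i+1) := by
    intro i _
    rw [ha1 i, map_div₀, Complex.abs.map_neg]
    have horb := aux_orbit c z hz_c (i+1)
    have h2i : (0:ℝ) < 2^(i+1) := by positivity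
    have hub : (2:ℝ)^(i+1) * R ≤ Complex.abs (f0iter c (i+1) z) := by
      calc (2:ℝ)^(i+1) * R ≤ 2^(i+1) * Complex.abs z := by nlinarith
        _ ≤ _ := horb
    have hpos2 : (0:ℝ) < 2^(i+1) * R := by positivity
    calc Complex.abs c / Complex.abs (f0iter c (i+1) z)
        ≤ Complex.abs c / (2^(i+1) * R) := by
          apply div_le_div_of_nonneg_left hc0 hpos2 hub
      _ = (Complex.abs c / R) * (1/2)^(i+1) := by
          rw [div_pow, one_pow]
          ring
  have hesum : ∑ i ∈ Finset.range N, (Complex.abs c / R) * ((1:ℝ)/2)^(i+1) ≤ 1/4 := by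
    have h7 : ∑ i ∈ Finset.range N, (Complex.abs c / R) * ((1:ℝ)/2)^(i+1)
        = (Complex.abs c / R) * ∑ i ∈ Finset.range N, ((1:ℝ)/2)^(i+1) := by
      rw [← Finset.mul_sum]
    have h8 := aux_geom_half N
    have h9 : Complex.abs c / R ≤ 1/4 := by
      rw [div_le_iff₀ (by linarith)]
      linarith
    have h10 : (0:ℝ) ≤ Complex.abs c / R := by positivity
    have h11 : (0:ℝ) ≤ ∑ i ∈ Finset.range N, ((1:ℝ)/2)^(i+1) :=
      Finset.sum_nonneg (fun i _ => by positivity)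
    rw [h7]
    nlinarith
  have hpert := aux_prod_perturb (Finset.range N)
    (fun i => f0iter c i z^2 / f0iter c (i+1) z)
    (fun i => (Complex.abs c / R) * (1/2)^(i+1)) hae
    (fun i _ => by positivity) (by linarith)
  have hReA : (512:ℝ) ≤ (z * logDeriv (f0iter c N) z).re := by
    rw [hA]
    set P := ∏ i ∈ Finset.range N, (f0iter c i z^2 / f0iter c (i+1) z) with hPdef2
    have hP1 : Complex.abs (P - 1) ≤ 1/2 := by
      calc Complex.abs (P - 1) ≤ 2 * ∑ i ∈ Finset.range N,
            (Complex.abs c / R) * ((1:ℝ)/2)^(i+1) := hpert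
        _ ≤ 1/2 := by linarith
    have hReP : (1/2:ℝ) ≤ P.re := by
      have h12 := Complex.abs_re_le_abs (P - 1)
      have h13 : (P - 1).re = P.re - 1 := by simp
      rw [h13] at h12
      have := abs_le.mp (le_trans h12 hP1)
      linarith
    have h14 : ((2:ℂ)^N * P).re = (2:ℝ)^N * P.re := by
      have hcast : ((2:ℂ)^N) = (((2:ℝ)^N : ℝ) : ℂ) := by norm_cast
      rw [hcast, Complex.re_ofReal_mul]
    rw [h14]
    have h15 : (1024:ℝ) ≤ 2^N := by
      calc (1024:ℝ) = 2^10 := by norm_num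
      _ ≤ 2^N := pow_le_pow_right₀ (by norm_num) hN
    nlinarith
  -- Re of B
  have hReB : (0:ℝ) ≤ (∑ j ∈ Finset.Icc 1 k, z * logDeriv (Fseq c N R j) z).re := by
    rw [Complex.re_sum]
    exact Finset.sum_nonneg (fun j hj => (hhead j hj).2)
  -- C bound
  have hCterm : ∀ j : ℕ, Complex.abs (z * g' j z) ≤ (1/2)^j := by
    intro j
    have hRj := htail5 j
    have hRjpos := htailpos j
    have hnj := hnbig (j+k+1)
    have ht : Complex.abs (z / ((Rseq c N R (j+k+1) : ℝ):ℂ)) ≤ 1/2 := by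
      rw [map_div₀, Complex.abs_ofReal, abs_of_pos hRjpos, div_le_iff₀ hRjpos]
      nlinarith
    have hpow : (z / ((Rseq c N R (j+k+1) : ℝ):ℂ))^(nseq N (j+k+1) - 1)
        * (z / ((Rseq c N R (j+k+1) : ℝ):ℂ)) = (z / ((Rseq c N R (j+k+1) : ℝ):ℂ))^(nseq N (j+k+1)) := by
      rw [← pow_succ]
      congr 1
      omega
    have hzD : z * (-((1/2:ℂ) * ((nseq N (j+k+1) : ℂ)
        * (z / ((Rseq c N R (j+k+1) : ℝ):ℂ)) ^ (nseq N (j+k+1) - 1)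
        * (1/((Rseq c N R (j+k+1) : ℝ):ℂ)))))
        = -((nseq N (j+k+1) : ℂ) * ((1/2:ℂ) * (z / ((Rseq c N R (j+k+1) : ℝ):ℂ)) ^ (nseq N (j+k+1)))) := by
      calc z * (-((1/2:ℂ) * ((nseq N (j+k+1) : ℂ)
            * (z / ((Rseq c N R (j+k+1) : ℝ):ℂ)) ^ (nseq N (j+k+1) - 1)
            * (1/((Rseq c N R (j+k+1) : ℝ):ℂ)))))
          = -((nseq N (j+k+1) : ℂ) * ((1/2:ℂ)
              * ((z / ((Rseq c N R (j+k+1) : ℝ):ℂ)) ^ (nseq N (j+k+1) - 1)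
              * (z * (1/((Rseq c N R (j+k+1) : ℝ):ℂ)))))) := by ring
        _ = -((nseq N (j+k+1) : ℂ) * ((1/2:ℂ)
              * ((z / ((Rseq c N R (j+k+1) : ℝ):ℂ)) ^ (nseq N (j+k+1) - 1)
              * (z / ((Rseq c N R (j+k+1) : ℝ):ℂ))))) := by rw [mul_one_div]
        _ = _ := by rw [hpow]
    have hinv2 := (hFfacts j z hzball).2.1
    have hmul : z * g' j z = (Fseq c N R (j+k+1) z)⁻¹
        * (z * (-((1/2:ℂ) * ((nseq N (j+k+1) : ℂ)
            * (z / ((Rseq c N R (j+k+1) : ℝ):ℂ)) ^ (nseq N (j+k+1) - 1)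
            * (1/((Rseq c N R (j+k+1) : ℝ):ℂ)))))) := by
      rw [hg'def]
      ring
    rw [hmul, hzD, map_mul]
    rw [Complex.abs.map_neg, map_mul, map_mul, map_pow]
    have h12 : Complex.abs ((1:ℂ)/2) = 1/2 := by norm_num
    have hn : Complex.abs ((nseq N (j+k+1) : ℂ)) = (nseq N (j+k+1) : ℝ) :=
      Complex.abs_natCast _
    rw [h12, hn]
    have htpow : Complex.abs (z / ((Rseq c N R (j+k+1) : ℝ):ℂ)) ^ (nseq N (j+k+1))
        ≤ (1/2:ℝ) ^ (nseq N (j+k+1)) :=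
      pow_le_pow_left₀ (Complex.abs.nonneg _) ht _
    have hhalf : ((1:ℝ)/2) ^ (nseq N (j+k+1)) ≤ (3/5:ℝ) ^ (nseq N (j+k+1) - 1) := by
      calc ((1:ℝ)/2) ^ (nseq N (j+k+1)) ≤ ((1:ℝ)/2) ^ (nseq N (j+k+1) - 1) :=
            pow_le_pow_of_le_one (by norm_num) (by norm_num) (by omega)
        _ ≤ (3/5:ℝ) ^ (nseq N (j+k+1) - 1) :=
            pow_le_pow_left₀ (by norm_num) (by norm_num) _
    have hq' := hq j
    have hnn : (0:ℝ) ≤ (nseq N (j+k+1) : ℝ) := Nat.cast_nonneg _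
    calc Complex.abs ((Fseq c N R (j+k+1) z)⁻¹) * ((nseq N (j+k+1) : ℝ)
          * (1/2 * Complex.abs (z / ((Rseq c N R (j+k+1) : ℝ):ℂ)) ^ (nseq N (j+k+1))))
        ≤ 2 * ((nseq N (j+k+1) : ℝ) * (1/2 * (1/2:ℝ) ^ (nseq N (j+k+1)))) := by
          apply mul_le_mul hinv2 _ (by positivity) (by norm_num)
          apply mul_le_mul_of_nonneg_left _ hnn
          nlinarith [pow_nonneg (Complex.abs.nonneg (z / ((Rseq c N R (j+k+1) : ℝ):ℂ))) (nseq N (j+k+1))]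
      _ = (nseq N (j+k+1) : ℝ) * (1/2:ℝ) ^ (nseq N (j+k+1)) := by ring
      _ ≤ (nseq N (j+k+1) : ℝ) * (3/5:ℝ) ^ (nseq N (j+k+1) - 1) := by
          apply mul_le_mul_of_nonneg_left hhalf hnn
      _ ≤ (1/2)^j := hq'
  have hCsum : Summable (fun j => Complex.abs (z * g' j z)) :=
    Summable.of_nonneg_of_le (fun j => Complex.abs.nonneg _) hCterm hu
  have hCd : Complex.abs (z * (∑' j, g' j z)) ≤ 2 := by
    rw [← tsum_mul_left]
    calc Complex.abs (∑' j, z * g' j z) ≤ ∑' j, Complex.abs (z * g' j z) := by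
          have := norm_tsum_le_tsum_norm (f := fun j => z * g' j z)
            (by simpa using hCsum)
          simpa using this
      _ ≤ ∑' j, ((1:ℝ)/2)^j := Summable.tsum_le_tsum hCterm hCsum hu
      _ = 2 := tsum_geometric_two
  -- conclusion
  have hzL : z * logDeriv (flim c N R) z
      = (z * logDeriv (f0iter c N) z)
        + (∑ j ∈ Finset.Icc 1 k, z * logDeriv (Fseq c N R j) z)
        + z * (∑' j, g' j z) := by
    rw [hlogflim, mul_add, mul_add, Finset.mul_sum]
  have hCre : -(2:ℝ) ≤ (z * (∑' j, g' j z)).re := by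
    have h16 := Complex.abs_re_le_abs (z * (∑' j, g' j z))
    have := abs_le.mp (le_trans h16 hCd)
    linarith
  have hrepos : 0 < (z * logDeriv (flim c N R) z).re := by
    rw [hzL]
    simp only [Complex.add_re]
    linarith
  intro hd0
  have hL0 : logDeriv (flim c N R) z = 0 := by
    rw [logDeriv_apply, hd0, zero_div]
  rw [hL0, mul_zero] at hrepos
  simp at hrepos


end
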